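/- Let f : ℝⁿ → ℝ be convex and C¹ with f(0) = 0, ∇f(x) ≠ 0 for x ≠ 0, and define θ(x) = f(x)/(‖x‖·‖∇f(x)‖) for x ≠ 0. Then the CARM operator with the gradient separating operator applied at (x, 0) ∈ ℝ^{n+1} equals C^S(x, 0) = (x − (f(x)/‖∇f(x)‖²)∇f(x), 0) and satisfies ‖C^S(x,0)‖²/‖x‖² ≤ 1 − θ(x)², whenever f(x) > 0. -/

import Mathlib

open Filter Topology
open scoped RealInnerProductSpace

private lemma grad_ineq18 {n : ℕ} {f : EuclideanSpace ℝ (Fin n) → ℝ}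
    {a x : EuclideanSpace ℝ (Fin n)}
    (hconv : ConvexOn ℝ Set.univ f) (hgrad : HasGradientAt f a x) (hf0 : f 0 = 0) :
    f x ≤ ⟪a, x⟫ := by
  set g : ℝ → ℝ := fun t => f (x - t • x) with hg
  have hc : HasDerivAt (fun t : ℝ => x - t • x) (-x) (0 : ℝ) := by
    simpa using ((hasDerivAt_id (0 : ℝ)).smul_const x).const_sub x
  have hgd : HasDerivAt g (-⟪a, x⟫) 0 := by
    have h0 : x - (0 : ℝ) • x = x := by simp
    have := hgrad.hasFDerivAt
    rw [← h0] at this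
    have h2 := this.comp_hasDerivAt (0 : ℝ) hc
    simp [InnerProductSpace.toDual_apply_apply, inner_neg_right] at h2
    exact h2
  have hslope : Tendsto (slope g 0) (𝓝[>] (0:ℝ)) (𝓝 (-⟪a, x⟫)) :=
    (hasDerivAt_iff_tendsto_slope.mp hgd).mono_left (nhdsWithin_mono _ (by
      intro t ht; exact ne_of_gt ht))
  have hev : ∀ᶠ t in 𝓝[>] (0:ℝ), slope g 0 t ≤ -f x := by
    filter_upwards [Ioo_mem_nhdsGT_of_mem (by norm_num : (0:ℝ) ∈ Set.Ico 0 1)] with t ht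
    have h1 : g t ≤ (1 - t) * f x := by
      have := hconv.2 (Set.mem_univ x) (Set.mem_univ (0 : EuclideanSpace ℝ (Fin n)))
        (by linarith [ht.1, ht.2] : (0:ℝ) ≤ 1 - t) (le_of_lt ht.1) (by ring)
      simpa [hf0, hg, smul_smul, sub_smul, one_smul] using this
    have h2 : g 0 = f x := by simp [hg]
    have h3 : slope g 0 t = (g t - f x) / t := by
      simp [slope, h2]; ring
    rw [h3, div_le_iff₀ ht.1]
    have := ht.1
    nlinarith
  have := le_of_tendsto hslope hev
  linarith

private lemma proj_eq18 {W : Type*} [NormedAddCommGroup W] [InnerProductSpace ℝ W]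
    {v X p : W} {b : ℝ} (hb : 0 < b)
    (hmem : b ≤ ⟪v, X - p⟫)
    (hle : dist X p ≤ b / ‖v‖) :
    X - p = (b / ‖v‖ ^ 2) • v := by
  have hv : v ≠ 0 := by
    rintro rfl
    simp only [inner_zero_left] at hmem
    linarith
  have hnv : 0 < ‖v‖ := norm_pos_iff.2 hv
  have hcs : ⟪v, X - p⟫ ≤ ‖v‖ * ‖X - p‖ := real_inner_le_norm v (X - p)
  rw [dist_eq_norm] at hle
  have hd : ‖X - p‖ = b / ‖v‖ := by
    have h2 : b / ‖v‖ ≤ ‖X - p‖ := by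
      rw [div_le_iff₀ hnv]
      nlinarith
    linarith
  have heq : ⟪v, X - p⟫ = ‖v‖ * ‖X - p‖ := by
    have : ‖v‖ * ‖X - p‖ = b := by rw [hd]; field_simp
    linarith
  have h2 := inner_eq_norm_mul_iff_real.mp heq
  rw [hd] at h2
  have h3 : (‖v‖)⁻¹ • ((b / ‖v‖) • v) = (‖v‖)⁻¹ • (‖v‖ • (X - p)) := by rw [h2]
  rw [smul_smul, smul_smul, inv_mul_cancel₀ (ne_of_gt hnv), one_smul] at h3
  rw [← h3]
  congr 1
  rw [sq]
  field_simp

set_option maxHeartbeats 2000000 in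
theorem stmt_18 {n : ℕ} (f : EuclideanSpace ℝ (Fin n) → ℝ)
    (f' : EuclideanSpace ℝ (Fin n) → EuclideanSpace ℝ (Fin n))
    (hconv : ConvexOn ℝ Set.univ f)
    (hgrad : ∀ y, HasGradientAt f (f' y) y)
    (hf0 : f 0 = 0)
    (hcrit : ∀ y, y ≠ 0 → f' y ≠ 0)
    (x : EuclideanSpace ℝ (Fin n)) (hfx : 0 < f x)
    -- the ambient space ℝ^{n+1} is modeled as the ℓ² product E ×₂ ℝ
    (emb : EuclideanSpace ℝ (Fin n) × ℝ ≃ WithLp 2 (EuclideanSpace ℝ (Fin n) × ℝ))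
    (hemb : emb = (WithLp.equiv 2 (EuclideanSpace ℝ (Fin n) × ℝ)).symm)
    (U : Set (WithLp 2 (EuclideanSpace ℝ (Fin n) × ℝ)))
    (hUdef : U = {p | (emb.symm p).2 = 0})
    -- the separating half-space at (x,0), given by the gradient (∇f(x), -1) of g(y,s)=f(y)-s
    (Sx : Set (WithLp 2 (EuclideanSpace ℝ (Fin n) × ℝ)))
    (hSx : Sx = {z | ⟪emb (f' x, -1), z - emb (x, 0)⟫ + f x ≤ 0})
    -- projection of (x,0) onto the half-space, and the reflection
    (pS : WithLp 2 (EuclideanSpace ℝ (Fin n) × ℝ))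
    (hpS : pS ∈ Sx ∧ ∀ w ∈ Sx, dist (emb (x, 0)) pS ≤ dist (emb (x, 0)) w)
    (rS : WithLp 2 (EuclideanSpace ℝ (Fin n) × ℝ))
    (hrS : rS = (2 : ℝ) • pS - emb (x, 0))
    -- projection of R^S(x,0) onto U, and the reflection
    (pU : WithLp 2 (EuclideanSpace ℝ (Fin n) × ℝ))
    (hpU : pU ∈ U ∧ ∀ w ∈ U, dist rS pU ≤ dist rS w)
    (rU : WithLp 2 (EuclideanSpace ℝ (Fin n) × ℝ))
    (hrU : rU = (2 : ℝ) • pU - rS)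
    -- the circumcenter of (x,0), R^S(x,0), R_U(R^S(x,0))
    (c : WithLp 2 (EuclideanSpace ℝ (Fin n) × ℝ))
    (hc : c ∈ affineSpan ℝ ({emb (x, 0), rS, rU} :
        Set (WithLp 2 (EuclideanSpace ℝ (Fin n) × ℝ))) ∧
      dist c (emb (x, 0)) = dist c rS ∧ dist c (emb (x, 0)) = dist c rU) :
    c = emb (x - (f x / ‖f' x‖ ^ 2) • f' x, 0) ∧
    ‖x - (f x / ‖f' x‖ ^ 2) • f' x‖ ^ 2 / ‖x‖ ^ 2 ≤
      1 - (f x / (‖x‖ * ‖f' x‖)) ^ 2 := by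
  subst hemb hUdef hSx
  obtain ⟨hpS1, hpS2⟩ := hpS
  obtain ⟨hpU1, hpU2⟩ := hpU
  obtain ⟨hcspan, hc1, hc2⟩ := hc
  set em := (WithLp.equiv 2 (EuclideanSpace ℝ (Fin n) × ℝ)).symm with hem
  set a := f' x with ha
  -- primitive facts about the embedding
  have hadd : ∀ p q : EuclideanSpace ℝ (Fin n) × ℝ, em (p + q) = em p + em q := fun _ _ => rfl
  have hsub : ∀ p q : EuclideanSpace ℝ (Fin n) × ℝ, em (p - q) = em p - em q := fun _ _ => rfl
  have hsmul : ∀ (r : ℝ) (p : EuclideanSpace ℝ (Fin n) × ℝ), em (r • p) = r • em p :=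
    fun _ _ => rfl
  have hip : ∀ p q : EuclideanSpace ℝ (Fin n) × ℝ, ⟪em p, em q⟫ = ⟪p.1, q.1⟫ + p.2 * q.2 :=
    fun p q => by show ⟪p.1, q.1⟫ + ⟪p.2, q.2⟫ = _; simp [mul_comm]
  have hip' : ∀ (p : EuclideanSpace ℝ (Fin n) × ℝ) (z : WithLp 2 (EuclideanSpace ℝ (Fin n) × ℝ)),
      ⟪em p, z⟫ = ⟪p.1, z.fst⟫ + p.2 * z.snd := fun p z => by
      show ⟪p.1, z.ofLp.1⟫ + ⟪p.2, z.ofLp.2⟫ = ⟪p.1, z.ofLp.1⟫ + p.2 * z.ofLp.2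
      congr 1; simp [mul_comm]
  have hsnd : ∀ z : WithLp 2 (EuclideanSpace ℝ (Fin n) × ℝ), (em.symm z).2 = z.snd := fun _ => rfl
  -- basic positivity
  have hx0 : x ≠ 0 := by
    rintro rfl
    rw [hf0] at hfx
    exact lt_irrefl 0 hfx
  have ha0 : a ≠ 0 := hcrit x hx0
  have hna : 0 < ‖a‖ := norm_pos_iff.2 ha0
  have hnx : 0 < ‖x‖ := norm_pos_iff.2 hx0
  have hgi : f x ≤ ⟪a, x⟫ := grad_ineq18 hconv (hgrad x) hf0
  set X := em (x, 0) with hX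
  set v := em (a, -1) with hv
  set e := em ((0 : EuclideanSpace ℝ (Fin n)), (1 : ℝ)) with he
  set va := em (a, (0 : ℝ)) with hva
  have hvv0 : ⟪v, v⟫ = ⟪a, a⟫ + (-1 : ℝ) * (-1) := hip (a, -1) (a, -1)
  have hvv : ⟪v, v⟫ = ‖a‖ ^ 2 + 1 := by
    rw [hvv0, real_inner_self_eq_norm_sq]; ring
  have hnv2 : ‖v‖ ^ 2 = ‖a‖ ^ 2 + 1 := by rw [← real_inner_self_eq_norm_sq]; exact hvv
  have hVpos : 0 < ‖v‖ ^ 2 := by rw [hnv2]; positivity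
  have hnvpos : 0 < ‖v‖ := by
    rcases lt_or_eq_of_le (norm_nonneg v) with h | h
    · exact h
    · rw [← h] at hVpos; simp at hVpos
  set t := f x / ‖v‖ ^ 2 with ht
  have htpos : 0 < t := div_pos hfx hVpos
  have htV : t * (‖a‖ ^ 2 + 1) = f x := by
    rw [ht, ← hnv2]
    field_simp
  -- step 1 : identify pS
  have hmemS : f x ≤ ⟪v, X - pS⟫ := by
    have h := hpS1
    simp only [Set.mem_setOf_eq] at h
    have h2 : ⟪v, X - pS⟫ = -⟪v, pS - X⟫ := by rw [← inner_neg_right, neg_sub]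
    linarith
  have hqmem : (X - t • v) ∈ {z | ⟪v, z - X⟫ + f x ≤ 0} := by
    simp only [Set.mem_setOf_eq]
    have h1 : (X - t • v) - X = -(t • v) := by abel
    rw [h1, inner_neg_right, real_inner_smul_right, real_inner_self_eq_norm_sq, ht,
      div_mul_cancel₀ _ (ne_of_gt hVpos)]
    linarith
  have hdq : dist X (X - t • v) = f x / ‖v‖ := by
    rw [dist_eq_norm]
    have h1 : X - (X - t • v) = t • v := by abel
    rw [h1, norm_smul, Real.norm_eq_abs, abs_of_pos htpos, ht, sq]
    field_simp
  have hps_eq : X - pS = t • v := by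
    have h := proj_eq18 hfx hmemS (le_of_le_of_eq (hpS2 _ hqmem) hdq)
    rw [h, ht]
  have hpSv : pS = X - t • v := by rw [← hps_eq]; abel
  have hrSf : rS = X - (2 * t) • v := by rw [hrS, hpSv]; module
  -- step 2 : identify pU
  have hee0 : ⟪e, e⟫ = ⟪(0 : EuclideanSpace ℝ (Fin n)), (0 : EuclideanSpace ℝ (Fin n))⟫ +
      (1 : ℝ) * 1 := hip (0, 1) (0, 1)
  have hee : ⟪e, e⟫ = 1 := by rw [hee0, inner_zero_left]; ring
  have hne1 : ‖e‖ = 1 := by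
    have h1 : ‖e‖ ^ 2 = 1 := by rw [← real_inner_self_eq_norm_sq]; exact hee
    have h2 : Real.sqrt (‖e‖ ^ 2) = Real.sqrt 1 := by rw [h1]
    simpa [Real.sqrt_sq (norm_nonneg e)] using h2
  have hev0 : ⟪e, v⟫ = ⟪(0 : EuclideanSpace ℝ (Fin n)), a⟫ + (1 : ℝ) * (-1) :=
    hip (0, 1) (a, -1)
  have hev' : ⟪e, v⟫ = -1 := by rw [hev0, inner_zero_left]; ring
  have heX0 : ⟪e, X⟫ = ⟪(0 : EuclideanSpace ℝ (Fin n)), x⟫ + (1 : ℝ) * 0 := hip (0, 1) (x, 0)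
  have heX : ⟪e, X⟫ = 0 := by rw [heX0, inner_zero_left]; ring
  have herS : ⟪e, rS⟫ = 2 * t := by
    rw [hrSf, inner_sub_right, real_inner_smul_right, hev', heX]
    ring
  have hesnd : ∀ z : WithLp 2 (EuclideanSpace ℝ (Fin n) × ℝ), ⟪e, z⟫ = z.snd := by
    intro z
    have h0 : ⟪e, z⟫ = ⟪(0 : EuclideanSpace ℝ (Fin n)), z.fst⟫ + (1 : ℝ) * z.snd := hip' (0, 1) z
    rw [h0, inner_zero_left]; ring
  have hpUe : ⟪e, pU⟫ = 0 := by
    have h := hpU1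
    simp only [Set.mem_setOf_eq] at h
    rw [hesnd pU, ← hsnd pU]
    exact h
  have hmemU : 2 * t ≤ ⟪e, rS - pU⟫ := by
    rw [inner_sub_right, herS, hpUe]
    linarith
  have hwmem : (rS - (2 * t) • e) ∈
      {p : WithLp 2 (EuclideanSpace ℝ (Fin n) × ℝ) | (em.symm p).2 = 0} := by
    simp only [Set.mem_setOf_eq]
    rw [hsnd, ← hesnd, inner_sub_right, real_inner_smul_right, herS, hee]
    ring
  have hdw : dist rS (rS - (2 * t) • e) = (2 * t) / ‖e‖ := by
    rw [dist_eq_norm]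
    have h1 : rS - (rS - (2 * t) • e) = (2 * t) • e := by abel
    rw [h1, norm_smul, Real.norm_eq_abs, abs_of_pos (by linarith : (0:ℝ) < 2 * t), hne1]
    simp
  have hpu_eq : rS - pU = (2 * t) • e := by
    have h := proj_eq18 (by linarith : (0:ℝ) < 2 * t) hmemU
      (le_of_le_of_eq (hpU2 _ hwmem) hdw)
    rw [h, hne1]
    norm_num
  have hpUv : pU = rS - (2 * t) • e := by rw [← hpu_eq]; abel
  have hrUf : rU = rS - (4 * t) • e := by rw [hrU, hpUv]; module
  -- step 3 : rS, rU in terms of va and e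
  have hvave : v = va - e := by
    rw [hv, hva, he, ← hsub]
    congr 1
    simp [Prod.ext_iff]
  have hrS2 : rS = X + (-(2 * t)) • va + (2 * t) • e := by rw [hrSf, hvave]; module
  have hrU2 : rU = X + (-(2 * t)) • va + (-(2 * t)) • e := by rw [hrUf, hrSf, hvave]; module
  -- step 4 : circumcenter lies in X + span {va, e}
  have hsub_span : affineSpan ℝ ({X, rS, rU} :
      Set (WithLp 2 (EuclideanSpace ℝ (Fin n) × ℝ))) ≤
      AffineSubspace.mk' X (Submodule.span ℝ {va, e}) := by
    rw [affineSpan_le]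
    intro z hz
    simp only [Set.mem_insert_iff, Set.mem_singleton_iff] at hz
    rcases hz with rfl | rfl | rfl
    · exact AffineSubspace.self_mem_mk' _ _
    · rw [SetLike.mem_coe, AffineSubspace.mem_mk', vsub_eq_sub, hrS2]
      refine Submodule.mem_span_pair.mpr ⟨-(2 * t), 2 * t, ?_⟩
      module
    · rw [SetLike.mem_coe, AffineSubspace.mem_mk', vsub_eq_sub, hrU2]
      refine Submodule.mem_span_pair.mpr ⟨-(2 * t), -(2 * t), ?_⟩
      module
  have hcP : c - X ∈ Submodule.span ℝ ({va, e} :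
      Set (WithLp 2 (EuclideanSpace ℝ (Fin n) × ℝ))) := by
    have h := hsub_span hcspan
    rwa [AffineSubspace.mem_mk', vsub_eq_sub] at h
  obtain ⟨α, β, hab⟩ := Submodule.mem_span_pair.mp hcP
  -- step 5 : distance equations
  have hvava0 : ⟪va, va⟫ = ⟪a, a⟫ + (0 : ℝ) * 0 := hip (a, 0) (a, 0)
  have hvava : ⟪va, va⟫ = ‖a‖ ^ 2 := by
    rw [hvava0, real_inner_self_eq_norm_sq]; ring
  have hvae0 : ⟪va, e⟫ = ⟪a, (0 : EuclideanSpace ℝ (Fin n))⟫ + (0 : ℝ) * 1 := hip (a, 0) (0, 1)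
  have hvae : ⟪va, e⟫ = 0 := by rw [hvae0, inner_zero_right]; ring
  have heva : ⟪e, va⟫ = 0 := by rw [real_inner_comm]; exact hvae
  have hexp : ∀ r s : ℝ, ‖r • va + s • e‖ ^ 2 = r ^ 2 * ‖a‖ ^ 2 + s ^ 2 := by
    intro r s
    rw [← real_inner_self_eq_norm_sq]
    simp only [inner_add_left, inner_add_right, real_inner_smul_left, real_inner_smul_right,
      hvava, hvae, heva, hee]
    ring
  have hcX : c - X = α • va + β • e := hab.symm
  have hcc : c = X + (α • va + β • e) := by rw [← hcX]; abel
  have hcrS : c - rS = (α + 2 * t) • va + (β - 2 * t) • e := by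
    rw [hcc, hrS2]; module
  have hcrU : c - rU = (α + 2 * t) • va + (β + 2 * t) • e := by
    rw [hcc, hrU2]; module
  have d1 : ‖c - X‖ ^ 2 = ‖c - rS‖ ^ 2 := by rw [← dist_eq_norm, ← dist_eq_norm, hc1]
  have d2 : ‖c - X‖ ^ 2 = ‖c - rU‖ ^ 2 := by rw [← dist_eq_norm, ← dist_eq_norm, hc2]
  have E1 : α ^ 2 * ‖a‖ ^ 2 + β ^ 2 = (α + 2 * t) ^ 2 * ‖a‖ ^ 2 + (β - 2 * t) ^ 2 := by
    rw [← hexp, ← hexp, ← hcX, ← hcrS]; exact d1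
  have E2 : α ^ 2 * ‖a‖ ^ 2 + β ^ 2 = (α + 2 * t) ^ 2 * ‖a‖ ^ 2 + (β + 2 * t) ^ 2 := by
    rw [← hexp, ← hexp, ← hcX, ← hcrU]; exact d2
  have hbeta : β = 0 := by
    have h8 : t * β = 0 := by linear_combination (E1 - E2) / 8
    rcases mul_eq_zero.mp h8 with h | h
    · exact absurd h (ne_of_gt htpos)
    · exact h
  have hA0 : (‖a‖ : ℝ) ^ 2 ≠ 0 := by positivity
  have h4 : (4 * t) * (α * ‖a‖ ^ 2) = (4 * t) * (-(f x)) := by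
    rw [hbeta] at E1
    linear_combination -E1 - 4 * t * htV
  have hαA : α * ‖a‖ ^ 2 = -(f x) :=
    mul_left_cancel₀ (by positivity : (4 : ℝ) * t ≠ 0) h4
  have hα : α = -(f x) / ‖a‖ ^ 2 := by
    rw [eq_div_iff hA0]
    exact hαA
  have hcfin : c = X + α • va := by
    rw [hcc, hbeta]
    module
  have hrhs : em (x - (f x / ‖a‖ ^ 2) • a, 0) = X - (f x / ‖a‖ ^ 2) • va := by
    rw [hX, hva, ← hsmul, ← hsub]
    congr 1
    simp [Prod.ext_iff]
  constructor
  · rw [hcfin, hrhs, hα]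
    module
  · have hX2 : (0:ℝ) < ‖x‖ ^ 2 := by positivity
    have hxa : f x ≤ ⟪x, a⟫ := by rw [real_inner_comm]; exact hgi
    have hnorm : ‖x - (f x / ‖a‖ ^ 2) • a‖ ^ 2 =
        ‖x‖ ^ 2 - 2 * (f x / ‖a‖ ^ 2) * ⟪x, a⟫ + (f x / ‖a‖ ^ 2) ^ 2 * ‖a‖ ^ 2 := by
      rw [norm_sub_sq_real, real_inner_smul_right, norm_smul, Real.norm_eq_abs, mul_pow, sq_abs]
      ring
    have hs : 0 < f x / ‖a‖ ^ 2 := div_pos hfx (by positivity)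
    have key : ‖x - (f x / ‖a‖ ^ 2) • a‖ ^ 2 ≤ ‖x‖ ^ 2 - (f x) ^ 2 / ‖a‖ ^ 2 := by
      rw [hnorm]
      have h1 : (f x / ‖a‖ ^ 2) * (f x) ≤ (f x / ‖a‖ ^ 2) * ⟪x, a⟫ :=
        mul_le_mul_of_nonneg_left hxa (le_of_lt hs)
      have h2 : (f x / ‖a‖ ^ 2) ^ 2 * ‖a‖ ^ 2 = (f x) ^ 2 / ‖a‖ ^ 2 := by
        field_simp
      have h3 : (f x / ‖a‖ ^ 2) * (f x) = (f x) ^ 2 / ‖a‖ ^ 2 := by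
        field_simp
      linarith
    calc ‖x - (f x / ‖a‖ ^ 2) • a‖ ^ 2 / ‖x‖ ^ 2
        ≤ (‖x‖ ^ 2 - (f x) ^ 2 / ‖a‖ ^ 2) / ‖x‖ ^ 2 := by gcongr
      _ = 1 - (f x / (‖x‖ * ‖a‖)) ^ 2 := by
          field_simp
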